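/- Let 0 < r ≤ 1/2 and let l₁, l₂ be unit segments in the plane at distances δ₁ < r and δ₂ < r from the origin O, in directions α₁ and α₂ respectively, with corresponding triangles Δᵢ = conv(lᵢ ∪ {O}). If the angular difference |α₁ − α₂| (mod π) is at least arcsin(δ₁/r) + arcsin(δ₂/r), then the interiors of Δ₁ \ B_r and Δ₂ \ B_r are disjoint, where B_r is the open disk of radius r about O. -/

import Mathlib

open MeasureTheory Metric Set

/-- The unit vector in direction `α`. -/
noncomputable def dirVec (α : ℝ) : EuclideanSpace ℝ (Fin 2) :=
  (WithLp.equiv 2 (Fin 2 → ℝ)).symm ![Real.cos α, Real.sin α]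

@[simp] lemma dirVec_zero' (α : ℝ) : dirVec α 0 = Real.cos α := rfl
@[simp] lemma dirVec_one' (α : ℝ) : dirVec α 1 = Real.sin α := rfl

lemma sq_norm2' (x : EuclideanSpace ℝ (Fin 2)) : ‖x‖^2 = (x 0)^2 + (x 1)^2 := by
  rw [EuclideanSpace.norm_eq, Real.sq_sqrt (by positivity)]
  simp [Fin.sum_univ_two, sq_abs]

lemma hull_mem_decomp' {p d x : EuclideanSpace ℝ (Fin 2)}
    (hx : x ∈ convexHull ℝ ({p, p + d, 0} : Set (EuclideanSpace ℝ (Fin 2)))) :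
    ∃ c t : ℝ, c ∈ Set.Icc (0:ℝ) 1 ∧ x = c • (p + t • d) := by
  have hset : ({p, p + d, 0} : Set (EuclideanSpace ℝ (Fin 2))) = insert 0 {p, p + d} := by
    ext y; simp only [Set.mem_insert_iff, Set.mem_singleton_iff]; tauto
  rw [hset, convexHull_insert ⟨p, by simp⟩, convexHull_pair, mem_convexJoin] at hx
  obtain ⟨a, ha, z, hz, hxz⟩ := hx
  rw [Set.mem_singleton_iff] at ha
  subst ha
  rw [segment_eq_image'] at hz
  rw [segment_eq_image'] at hxz
  obtain ⟨t, _, ht⟩ := hz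
  obtain ⟨c, hc, hcx⟩ := hxz
  refine ⟨c, t, hc, ?_⟩
  rw [← hcx, ← ht]
  simp

lemma cross_le_norm' (α : ℝ) (q : EuclideanSpace ℝ (Fin 2)) :
    |Real.cos α * q 1 - Real.sin α * q 0| ≤ ‖q‖ := by
  have h1 := sq_norm2' q
  have h2 := Real.sin_sq_add_cos_sq α
  have h3 : (Real.cos α * q 1 - Real.sin α * q 0)^2 ≤ ‖q‖^2 := by
    nlinarith [sq_nonneg (Real.sin α * q 1 + Real.cos α * q 0)]
  nlinarith [sq_abs (Real.cos α * q 1 - Real.sin α * q 0),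
    abs_nonneg (Real.cos α * q 1 - Real.sin α * q 0), norm_nonneg q]

lemma cross_hull_le' {α δ : ℝ} {p x : EuclideanSpace ℝ (Fin 2)}
    (hδ : Metric.infDist 0
      (affineSpan ℝ {p, p + dirVec α} : Set (EuclideanSpace ℝ (Fin 2))) = δ)
    (hx : x ∈ convexHull ℝ ({p, p + dirVec α, 0} : Set (EuclideanSpace ℝ (Fin 2)))) :
    |Real.cos α * x 1 - Real.sin α * x 0| ≤ δ := by
  set d := dirVec α with hd
  have hcp : |Real.cos α * p 1 - Real.sin α * p 0| ≤ δ := by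
    rw [← hδ]
    refine le_of_not_gt fun hlt => ?_
    obtain ⟨q, hq, hqd⟩ := (Metric.infDist_lt_iff ⟨p, mem_affineSpan ℝ (by simp)⟩).mp hlt
    obtain ⟨s, hs⟩ : ∃ s : ℝ, s • d + p = q := by
      have h0 : (q - p) +ᵥ p = q := by simp
      have := (vadd_left_mem_affineSpan_pair (k := ℝ) (p₁ := p) (p₂ := p + d) (v := q - p))
      rw [h0] at this
      obtain ⟨s, hs⟩ := this.mp hq
      simp only [vsub_eq_sub, add_sub_cancel_left] at hs
      exact ⟨s, by rw [hs]; abel⟩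
    have hcq : Real.cos α * q 1 - Real.sin α * q 0 = Real.cos α * p 1 - Real.sin α * p 0 := by
      rw [← hs]
      have e0 : (s • d + p) 0 = s * Real.cos α + p 0 := by simp [hd]
      have e1 : (s • d + p) 1 = s * Real.sin α + p 1 := by simp [hd]
      rw [e0, e1]; ring
    have := cross_le_norm' α q
    rw [hcq] at this
    rw [dist_zero_left] at hqd
    linarith
  obtain ⟨c, t, ⟨hc0, hc1⟩, hxc⟩ := hull_mem_decomp' hx
  have hx0 : x 0 = c * (p 0 + t * Real.cos α) := by rw [hxc]; simp [hd]; ring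
  have hx1 : x 1 = c * (p 1 + t * Real.sin α) := by rw [hxc]; simp [hd]; ring
  have : Real.cos α * x 1 - Real.sin α * x 0 = c * (Real.cos α * p 1 - Real.sin α * p 0) := by
    rw [hx0, hx1]; ring
  rw [this, abs_mul, abs_of_nonneg hc0]
  calc c * |Real.cos α * p 1 - Real.sin α * p 0|
      ≤ 1 * |Real.cos α * p 1 - Real.sin α * p 0| :=
        mul_le_mul_of_nonneg_right hc1 (abs_nonneg _)
    _ ≤ δ := by rw [one_mul]; exact hcp

lemma norm_dirVec' (α : ℝ) : ‖dirVec α‖ = 1 := by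
  have h := sq_norm2' (dirVec α)
  simp only [dirVec_zero', dirVec_one'] at h
  have h2 := Real.sin_sq_add_cos_sq α
  nlinarith [norm_nonneg (dirVec α)]

lemma interior_cross_lt' {α δ : ℝ} {p x : EuclideanSpace ℝ (Fin 2)}
    (hδ : Metric.infDist 0
      (affineSpan ℝ {p, p + dirVec α} : Set (EuclideanSpace ℝ (Fin 2))) = δ)
    (hx : x ∈ interior (convexHull ℝ ({p, p + dirVec α, 0} : Set (EuclideanSpace ℝ (Fin 2))))) :
    |Real.cos α * x 1 - Real.sin α * x 0| < δ := by
  obtain ⟨ε, hε, hball⟩ := Metric.isOpen_iff.mp isOpen_interior x hx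
  set c := Real.cos α * x 1 - Real.sin α * x 0 with hc
  set w : EuclideanSpace ℝ (Fin 2) := dirVec (α + Real.pi/2) with hw
  have hw0 : w 0 = -Real.sin α := by rw [hw, dirVec_zero', Real.cos_add_pi_div_two]
  have hw1 : w 1 = Real.cos α := by rw [hw, dirVec_one', Real.sin_add_pi_div_two]
  set s : ℝ := if 0 ≤ c then 1 else -1 with hsdef
  have hs1 : |s| = 1 := by rw [hsdef]; split <;> simp
  have hmem : x + (s * (ε/2)) • w ∈
      convexHull ℝ ({p, p + dirVec α, 0} : Set (EuclideanSpace ℝ (Fin 2))) := by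
    refine interior_subset (hball ?_)
    rw [Metric.mem_ball, dist_eq_norm]
    have : x + (s * (ε/2)) • w - x = (s * (ε/2)) • w := by abel
    rw [this, norm_smul, norm_dirVec', mul_one, Real.norm_eq_abs, abs_mul, hs1, one_mul,
      abs_of_pos (by linarith)]
    linarith
  have hkey := cross_hull_le' hδ hmem
  have e0 : (x + (s * (ε/2)) • w) 0 = x 0 + s * (ε/2) * (-Real.sin α) := by simp [hw0]
  have e1 : (x + (s * (ε/2)) • w) 1 = x 1 + s * (ε/2) * Real.cos α := by simp [hw1]
  have hcross : Real.cos α * (x + (s * (ε/2)) • w) 1 - Real.sin α * (x + (s * (ε/2)) • w) 0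
      = c + s * (ε/2) * ((Real.sin α)^2 + (Real.cos α)^2) := by
    rw [e0, e1, hc]; ring
  rw [hcross, Real.sin_sq_add_cos_sq, mul_one] at hkey
  have : |c| + ε/2 ≤ δ := by
    rw [hsdef] at hkey
    rcases le_or_gt 0 c with h | h
    · rw [if_pos h] at hkey
      rw [abs_of_nonneg h]
      rw [abs_of_nonneg (by linarith)] at hkey
      linarith
    · rw [if_neg (not_le.mpr h)] at hkey
      rw [abs_of_neg h]
      rw [abs_of_neg (by linarith : c + -1 * (ε/2) < 0)] at hkey
      linarith
  linarith

open Real in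
lemma exists_near_multiple' {β t : ℝ} (hβ0 : 0 ≤ β) (hβ : β ≤ π/2)
    (h : |Real.sin t| < Real.sin β) : ∃ k : ℤ, |t - k * π| < β := by
  refine ⟨round (t / π), ?_⟩
  set k := round (t / π) with hk
  have hπ : (0:ℝ) < π := Real.pi_pos
  have habs : |t - k * π| = |t / π - k| * π := by
    have e : (t / π - k) * π = t - k * π := by field_simp
    rw [← e, abs_mul, abs_of_pos hπ]
  have h1 : |t - k * π| ≤ π/2 := by
    rw [habs]
    have := abs_sub_round (t / π)
    nlinarith
  have hsin : |Real.sin (t - k * π)| = |Real.sin t| := by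
    rw [Real.sin_sub_int_mul_pi, abs_mul]
    have : |((-1 : ℝ)) ^ k| = 1 := by
      rcases Int.even_or_odd k with he | ho
      · rw [he.neg_one_zpow]; simp
      · rw [ho.neg_one_zpow]; simp
    rw [this, one_mul]
  set u := t - k * π with hu
  have h2 : |Real.sin u| < Real.sin β := by rw [hsin]; exact h
  have h3 : Real.sin |u| = |Real.sin u| := by
    rcases le_or_gt 0 u with hge | hlt
    · rw [abs_of_nonneg hge, abs_of_nonneg (Real.sin_nonneg_of_nonneg_of_le_pi hge
        (by linarith [abs_of_nonneg hge, abs_le.mp h1]))]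
    · rw [abs_of_neg hlt, Real.sin_neg, abs_of_nonpos]
      exact Real.sin_nonpos_of_nonpos_of_neg_pi_le (le_of_lt hlt)
        (by linarith [abs_le.mp h1, abs_of_neg hlt])
  by_contra hcon
  push_neg at hcon
  have : Real.sin β ≤ Real.sin |u| := by
    apply Real.strictMonoOn_sin.monotoneOn
    · constructor <;> [linarith; linarith]
    · constructor
      · linarith [abs_nonneg u]
      · exact h1
    · exact hcon
  rw [h3] at this
  linarith

open Real in
lemma min_le_abs_sub_int_mul' {D : ℝ} (hD1 : -π < D) (hD2 : D < π) (m : ℤ) :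
    min |D| (π - |D|) ≤ |D - m * π| := by
  have hπ : (0:ℝ) < π := Real.pi_pos
  rcases lt_trichotomy m 0 with h | h | h
  · have hm : (m:ℝ) ≤ -1 := by exact_mod_cast Int.le_of_lt_add_one (by omega : m < -1 + 1)
    have h1 : |D - m * π| = D - m * π := abs_of_pos (by nlinarith)
    have := min_le_right |D| (π - |D|)
    rcases abs_cases D with ⟨e, _⟩ | ⟨e, _⟩ <;> nlinarith
  · subst h; simp
  · have hm : (1:ℝ) ≤ (m:ℝ) := by exact_mod_cast h
    have h1 : |D - m * π| = m * π - D := by rw [abs_of_neg (by nlinarith)]; ring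
    have := min_le_right |D| (π - |D|)
    rcases abs_cases D with ⟨e, _⟩ | ⟨e, _⟩ <;> nlinarith

/-- If two unit needles in directions `α₁, α₂ ∈ [0,π)` are at distances `δ₁, δ₂ < r` from
the origin and their angular separation (mod π) is at least `arcsin(δ₁/r) + arcsin(δ₂/r)`,
then the interiors of the exterior parts `Δᵢ \ B_r` of the corresponding triangles are
disjoint. -/
theorem exterior_parts_disjoint (r α₁ α₂ δ₁ δ₂ : ℝ)
    (p₁ p₂ : EuclideanSpace ℝ (Fin 2))
    (hr1 : 0 < r) (hr2 : r ≤ 1 / 2)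
    (hα₁ : α₁ ∈ Set.Ico 0 Real.pi) (hα₂ : α₂ ∈ Set.Ico 0 Real.pi)
    (hδ₁ : Metric.infDist 0
      (affineSpan ℝ {p₁, p₁ + dirVec α₁} : Set (EuclideanSpace ℝ (Fin 2))) = δ₁)
    (hδ₂ : Metric.infDist 0
      (affineSpan ℝ {p₂, p₂ + dirVec α₂} : Set (EuclideanSpace ℝ (Fin 2))) = δ₂)
    (hδ₁r : δ₁ < r) (hδ₂r : δ₂ < r)
    (hsep : Real.arcsin (δ₁ / r) + Real.arcsin (δ₂ / r) ≤
      min |α₁ - α₂| (Real.pi - |α₁ - α₂|)) :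
    interior ((convexHull ℝ {p₁, p₁ + dirVec α₁, (0 : EuclideanSpace ℝ (Fin 2))}) \ ball 0 r) ∩
      interior ((convexHull ℝ {p₂, p₂ + dirVec α₂, (0 : EuclideanSpace ℝ (Fin 2))}) \ ball 0 r)
      = ∅ := by
  by_contra hne
  rw [← Ne, ← Set.nonempty_iff_ne_empty] at hne
  obtain ⟨x, hx1, hx2⟩ := hne
  have hI1 : x ∈ interior (convexHull ℝ
      ({p₁, p₁ + dirVec α₁, 0} : Set (EuclideanSpace ℝ (Fin 2)))) :=
    interior_mono Set.diff_subset hx1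
  have hI2 : x ∈ interior (convexHull ℝ
      ({p₂, p₂ + dirVec α₂, 0} : Set (EuclideanSpace ℝ (Fin 2)))) :=
    interior_mono Set.diff_subset hx2
  have hxn : r < ‖x‖ := by
    have h1 : x ∈ interior ((ball (0:EuclideanSpace ℝ (Fin 2)) r)ᶜ) := by
      refine interior_mono ?_ hx1
      intro y hy; exact hy.2
    rw [interior_compl, closure_ball _ (ne_of_gt hr1)] at h1
    simpa [Metric.mem_closedBall, dist_zero_right, not_le] using h1
  have hδ₁0 : 0 ≤ δ₁ := hδ₁ ▸ Metric.infDist_nonneg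
  have hδ₂0 : 0 ≤ δ₂ := hδ₂ ▸ Metric.infDist_nonneg
  have hc1 := interior_cross_lt' hδ₁ hI1
  have hc2 := interior_cross_lt' hδ₂ hI2
  have hxpos : 0 < ‖x‖ := lt_trans hr1 hxn
  set z : ℂ := ⟨x 0, x 1⟩ with hzdef
  have hz : ‖z‖ = ‖x‖ := by
    have h1 : (‖z‖)^2 = ‖x‖^2 := by
      rw [Complex.sq_norm, Complex.normSq_mk, sq_norm2']; ring
    have h2 := norm_nonneg z
    nlinarith
  have hzne : z ≠ 0 := by
    intro h0
    rw [h0, norm_zero] at hz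
    linarith
  set θ := Complex.arg z with hθ
  have hcos : Real.cos θ = x 0 / ‖x‖ := by
    rw [hθ, Complex.cos_arg hzne, hz]
  have hsin : Real.sin θ = x 1 / ‖x‖ := by
    rw [hθ, Complex.sin_arg, hz]
  have key : ∀ α δ : ℝ, 0 ≤ δ → δ < r →
      |Real.cos α * x 1 - Real.sin α * x 0| < δ →
      |Real.sin (θ - α)| < Real.sin (Real.arcsin (δ / r)) := by
    intro α δ hδ0 hδr hc
    rw [Real.sin_arcsin (by linarith [div_nonneg hδ0 hr1.le]) (le_of_lt ((div_lt_one hr1).mpr hδr))]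
    have e : Real.sin (θ - α) = (Real.cos α * x 1 - Real.sin α * x 0) / ‖x‖ := by
      rw [Real.sin_sub, hcos, hsin]; field_simp
    rw [e, abs_div, abs_of_pos hxpos, div_lt_div_iff₀ hxpos hr1]
    nlinarith [abs_nonneg (Real.cos α * x 1 - Real.sin α * x 0)]
  have hs1 := key α₁ δ₁ hδ₁0 hδ₁r hc1
  have hs2 := key α₂ δ₂ hδ₂0 hδ₂r hc2
  obtain ⟨k₁, hk₁⟩ := exists_near_multiple'
    (Real.arcsin_nonneg.mpr (by positivity)) (Real.arcsin_le_pi_div_two _) hs1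
  obtain ⟨k₂, hk₂⟩ := exists_near_multiple'
    (Real.arcsin_nonneg.mpr (by positivity)) (Real.arcsin_le_pi_div_two _) hs2
  set β₁ := Real.arcsin (δ₁ / r)
  set β₂ := Real.arcsin (δ₂ / r)
  have hD : |(α₁ - α₂) - ((k₂ - k₁ : ℤ) : ℝ) * Real.pi| < β₁ + β₂ := by
    have e : (α₁ - α₂) - ((k₂ - k₁ : ℤ) : ℝ) * Real.pi
        = ((θ - α₂) - (k₂ : ℝ) * Real.pi) - ((θ - α₁) - (k₁ : ℝ) * Real.pi) := by
      push_cast; ring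
    rw [e]
    calc |((θ - α₂) - (k₂ : ℝ) * Real.pi) - ((θ - α₁) - (k₁ : ℝ) * Real.pi)|
        ≤ |(θ - α₂) - (k₂ : ℝ) * Real.pi| + |(θ - α₁) - (k₁ : ℝ) * Real.pi| := abs_sub _ _
      _ < β₁ + β₂ := by linarith
  have hmin := min_le_abs_sub_int_mul'
    (D := α₁ - α₂) (by linarith [hα₁.1, hα₂.2]) (by linarith [hα₁.2, hα₂.1]) (k₂ - k₁)
  push_cast at hmin
  push_cast at hD
  linarith
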